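/- arXiv:1404.6112 — 8 statements merged into one kernel-verified Lean document; each statement's English description precedes it below -/
import Mathlib

section
/- (Lemma 2, increasing case) Fix channel success probabilities f_pd, f_ps, f_sd ∈ (0,1) and a queue-selection probability p_q ∈ (0,1) with p_q < 1 − f_pd/f_sd. Then the maximum achievable primary arrival rate p_a ↦ Λ_p(p_q,p_a) is strictly increasing on [0,1]: for all 0 ≤ p_a1 < p_a2 ≤ 1 one has Λ_p(p_q,p_a1) < Λ_p(p_q,p_a2). -/
/-- Maximum achievable primary arrival rate Λ_p(p_q, p_a). -/
noncomputable def maxPrimaryRate (f_pd f_ps f_sd p_q p_a : ℝ) : ℝ :=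
  f_sd * (1 - p_q) * (f_pd + p_a * f_ps * (1 - f_pd)) /
    (f_sd * (1 - p_q) + p_a * f_ps * (1 - f_pd))

/-- Lemma 2, increasing case: if p_q < 1 - f_pd/f_sd then Λ_p(p_q, ·) is strictly
increasing in p_a on [0,1]. -/
theorem maxPrimaryRate_strictMono_in_pa (f_pd f_ps f_sd p_q : ℝ)
    (hpd : f_pd ∈ Set.Ioo (0 : ℝ) 1) (hps : f_ps ∈ Set.Ioo (0 : ℝ) 1)
    (hsd : f_sd ∈ Set.Ioo (0 : ℝ) 1) (hq : p_q ∈ Set.Ioo (0 : ℝ) 1)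
    (hcoop : p_q < 1 - f_pd / f_sd) :
    ∀ p_a1 p_a2 : ℝ, 0 ≤ p_a1 → p_a1 < p_a2 → p_a2 ≤ 1 →
      maxPrimaryRate f_pd f_ps f_sd p_q p_a1 < maxPrimaryRate f_pd f_ps f_sd p_q p_a2 := by
  intro p1 p2 h1 h12 h2
  obtain ⟨hpd0, hpd1⟩ := hpd
  obtain ⟨hps0, hps1⟩ := hps
  obtain ⟨hsd0, hsd1⟩ := hsd
  obtain ⟨hq0, hq1⟩ := hq
  have hA : 0 < f_sd * (1 - p_q) := mul_pos hsd0 (by linarith)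
  have hc : 0 < f_ps * (1 - f_pd) := mul_pos hps0 (by linarith)
  have hAf : f_pd < f_sd * (1 - p_q) := by
    have := (div_lt_iff₀ hsd0).mp (by linarith : f_pd / f_sd < 1 - p_q)
    linarith [this]
  have hd1 : 0 < f_sd * (1 - p_q) + p1 * f_ps * (1 - f_pd) := by nlinarith
  have hd2 : 0 < f_sd * (1 - p_q) + p2 * f_ps * (1 - f_pd) := by nlinarith
  unfold maxPrimaryRate
  rw [div_lt_div_iff₀ hd1 hd2]
  nlinarith [mul_pos hA hc, mul_pos (mul_pos hA hc) (sub_pos.mpr h12)]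
end

section
/- (Lemma 2, decreasing case) Fix channel success probabilities f_pd, f_ps, f_sd ∈ (0,1) and a queue-selection probability p_q ∈ (0,1) with p_q > 1 − f_pd/f_sd. Then the maximum achievable primary arrival rate p_a ↦ Λ_p(p_q,p_a) is strictly decreasing on [0,1]: for all 0 ≤ p_a1 < p_a2 ≤ 1 one has Λ_p(p_q,p_a2) < Λ_p(p_q,p_a1). -/
/-- Lemma 2, decreasing case: if p_q > 1 - f_pd/f_sd then Λ_p(p_q, ·) is strictly
decreasing in p_a on [0,1]. -/
theorem maxPrimaryRate_strictAnti_in_pa (f_pd f_ps f_sd p_q : ℝ)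
    (hpd : f_pd ∈ Set.Ioo (0 : ℝ) 1) (hps : f_ps ∈ Set.Ioo (0 : ℝ) 1)
    (hsd : f_sd ∈ Set.Ioo (0 : ℝ) 1) (hq : p_q ∈ Set.Ioo (0 : ℝ) 1)
    (hnocoop : 1 - f_pd / f_sd < p_q) :
    ∀ p_a1 p_a2 : ℝ, 0 ≤ p_a1 → p_a1 < p_a2 → p_a2 ≤ 1 →
      maxPrimaryRate f_pd f_ps f_sd p_q p_a2 < maxPrimaryRate f_pd f_ps f_sd p_q p_a1 := by
  obtain ⟨hpd0, hpd1⟩ := hpd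
  obtain ⟨hps0, hps1⟩ := hps
  obtain ⟨hsd0, hsd1⟩ := hsd
  obtain ⟨hq0, hq1⟩ := hq
  intro p1 p2 h1 h12 h2
  have hA : 0 < f_sd * (1 - p_q) := by nlinarith
  have hB : 0 < f_ps * (1 - f_pd) := by nlinarith
  have hAc : f_sd * (1 - p_q) < f_pd := by
    have h := (lt_div_iff₀ hsd0).mp (by linarith : 1 - p_q < f_pd / f_sd)
    nlinarith
  have hd1 : 0 < f_sd * (1 - p_q) + p1 * f_ps * (1 - f_pd) := by nlinarith
  have hd2 : 0 < f_sd * (1 - p_q) + p2 * f_ps * (1 - f_pd) := by nlinarith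
  unfold maxPrimaryRate
  rw [div_lt_div_iff₀ hd2 hd1]
  nlinarith [mul_pos (mul_pos (mul_pos hA hB) (sub_pos.mpr h12)) (sub_pos.mpr hAc)]
end

section
/- (Phase transition) Fix channel success probabilities f_pd, f_ps, f_sd ∈ (0,1) with f_pd < f_sd, and set p_q = 1 − f_pd/f_sd (which lies in (0,1)). Then the maximum achievable primary arrival rate is insensitive to the admission probability: Λ_p(1 − f_pd/f_sd, p_a) = f_pd for every p_a ∈ [0,1]. -/
/-- Phase transition: at p_q = 1 - f_pd/f_sd (which lies in (0,1)),
Λ_p is insensitive to the admission probability and equals f_pd. -/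
theorem maxPrimaryRate_phase_transition (f_pd f_ps f_sd : ℝ)
    (hpd : f_pd ∈ Set.Ioo (0 : ℝ) 1) (hps : f_ps ∈ Set.Ioo (0 : ℝ) 1)
    (hsd : f_sd ∈ Set.Ioo (0 : ℝ) 1) (hlt : f_pd < f_sd) :
    (1 - f_pd / f_sd) ∈ Set.Ioo (0 : ℝ) 1 ∧
    ∀ p_a ∈ Set.Icc (0 : ℝ) 1,
      maxPrimaryRate f_pd f_ps f_sd (1 - f_pd / f_sd) p_a = f_pd := by
  obtain ⟨hpd0, hpd1⟩ := hpd
  obtain ⟨hps0, _⟩ := hps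
  obtain ⟨hsd0, _⟩ := hsd
  constructor
  · constructor
    · have : f_pd / f_sd < 1 := (div_lt_one hsd0).mpr hlt
      linarith
    · have : 0 < f_pd / f_sd := div_pos hpd0 hsd0
      linarith
  · intro p_a ⟨ha0, _⟩
    have key : f_sd * (1 - (1 - f_pd / f_sd)) = f_pd := by
      field_simp
      ring
    have hx : 0 ≤ p_a * f_ps * (1 - f_pd) := by
      apply mul_nonneg (mul_nonneg ha0 hps0.le); linarith
    unfold maxPrimaryRate
    rw [key]
    rw [div_eq_iff (by linarith)]
end

section
/- Fix channel success probabilities f_pd, f_ps, f_sd ∈ (0,1) and a queue-selection probability p_q ∈ (0,1). Then for every p_a ∈ [0,1], the function a ↦ Λ_p(p_q,a) has derivative at p_a equal to (1−p_q)·(1−f_pd)·f_ps·f_sd·(f_sd·(1−p_q) − f_pd) / (f_sd·(1−p_q) + p_a·f_ps·(1−f_pd))². In particular the sign of this derivative is the sign of f_sd·(1−p_q) − f_pd. -/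
/-- Derivative of Λ_p with respect to p_a, whose sign is the sign of
f_sd·(1−p_q) − f_pd. -/
theorem deriv_maxPrimaryRate_pa (f_pd f_ps f_sd p_q : ℝ)
    (hpd : f_pd ∈ Set.Ioo (0 : ℝ) 1) (hps : f_ps ∈ Set.Ioo (0 : ℝ) 1)
    (hsd : f_sd ∈ Set.Ioo (0 : ℝ) 1) (hq : p_q ∈ Set.Ioo (0 : ℝ) 1) :
    ∀ p_a ∈ Set.Icc (0 : ℝ) 1,
      HasDerivAt (fun a => maxPrimaryRate f_pd f_ps f_sd p_q a)
        ((1 - p_q) * (1 - f_pd) * f_ps * f_sd * (f_sd * (1 - p_q) - f_pd) /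
          (f_sd * (1 - p_q) + p_a * f_ps * (1 - f_pd)) ^ 2) p_a ∧
      Real.sign ((1 - p_q) * (1 - f_pd) * f_ps * f_sd * (f_sd * (1 - p_q) - f_pd) /
          (f_sd * (1 - p_q) + p_a * f_ps * (1 - f_pd)) ^ 2)
        = Real.sign (f_sd * (1 - p_q) - f_pd) := by
  obtain ⟨hpd0, hpd1⟩ := hpd
  obtain ⟨hps0, hps1⟩ := hps
  obtain ⟨hsd0, hsd1⟩ := hsd
  obtain ⟨hq0, hq1⟩ := hq
  intro p_a hpa
  have hc : 0 < f_sd * (1 - p_q) := mul_pos hsd0 (by linarith)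
  have hk : 0 < f_ps * (1 - f_pd) := mul_pos hps0 (by linarith)
  have hden : 0 < f_sd * (1 - p_q) + p_a * f_ps * (1 - f_pd) := by
    have : 0 ≤ p_a * (f_ps * (1 - f_pd)) := mul_nonneg hpa.1 hk.le
    nlinarith
  have hden2 : 0 < (f_sd * (1 - p_q) + p_a * f_ps * (1 - f_pd)) ^ 2 := pow_pos hden 2
  constructor
  · have h1 : HasDerivAt (fun a : ℝ => f_sd * (1 - p_q) * (f_pd + a * f_ps * (1 - f_pd)))
        (f_sd * (1 - p_q) * (f_ps * (1 - f_pd))) p_a := by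
      have : HasDerivAt (fun a : ℝ => f_pd + a * (f_ps * (1 - f_pd)))
          (f_ps * (1 - f_pd)) p_a := by
        simpa using ((hasDerivAt_id p_a).mul_const (f_ps * (1 - f_pd))).const_add f_pd
      have := this.const_mul (f_sd * (1 - p_q))
      refine this.congr_of_eventuallyEq (Filter.Eventually.of_forall fun a => ?_)
      ring
    have h2 : HasDerivAt (fun a : ℝ => f_sd * (1 - p_q) + a * f_ps * (1 - f_pd))
        (f_ps * (1 - f_pd)) p_a := by
      have : HasDerivAt (fun a : ℝ => f_sd * (1 - p_q) + a * (f_ps * (1 - f_pd)))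
          (f_ps * (1 - f_pd)) p_a := by
        simpa using ((hasDerivAt_id p_a).mul_const (f_ps * (1 - f_pd))).const_add
          (f_sd * (1 - p_q))
      convert this using 2 <;> ring
    have := h1.div h2 hden.ne'
    refine (this.congr_of_eventuallyEq (Filter.Eventually.of_forall fun a => rfl)).congr_deriv ?_
    field_simp
    ring
  · set s := f_sd * (1 - p_q) - f_pd with hs
    set t := (1 - p_q) * (1 - f_pd) * f_ps * f_sd with ht
    have htpos : 0 < t := by
      apply mul_pos (mul_pos (mul_pos (by linarith : (0:ℝ) < 1 - p_q)
        (by linarith : (0:ℝ) < 1 - f_pd)) hps0) hsd0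
    rcases lt_trichotomy s 0 with h | h | h
    · rw [Real.sign_of_neg h, Real.sign_of_neg]
      exact div_neg_of_neg_of_pos (mul_neg_of_pos_of_neg htpos h) hden2
    · rw [h]; simp
    · rw [Real.sign_of_pos h, Real.sign_of_pos]
      exact div_pos (mul_pos htpos h) hden2
end

section
/- (Cooperation criterion) Fix channel success probabilities f_pd, f_ps, f_sd ∈ (0,1), a queue-selection probability p_q ∈ (0,1), and an admission probability p_a ∈ (0,1]. Then cooperation strictly enlarges the primary user's maximum achievable arrival rate beyond the no-cooperation value f_pd if and only if the relay-to-destination success probability exceeds the direct-link success probability: Λ_p(p_q,p_a) > f_pd ⟺ f_sd·(1−p_q) > f_pd. Moreover Λ_p(p_q,0) = f_pd for every p_q ∈ (0,1). -/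
/-- Cooperation criterion: cooperation strictly enlarges the primary user's
maximum achievable arrival rate beyond f_pd iff f_sd·(1−p_q) > f_pd.
Moreover, with admission probability 0, Λ_p reduces to f_pd. -/
theorem cooperation_criterion (f_pd f_ps f_sd : ℝ)
    (hpd : f_pd ∈ Set.Ioo (0 : ℝ) 1) (hps : f_ps ∈ Set.Ioo (0 : ℝ) 1)
    (hsd : f_sd ∈ Set.Ioo (0 : ℝ) 1) :
    (∀ p_q ∈ Set.Ioo (0 : ℝ) 1, ∀ p_a ∈ Set.Ioc (0 : ℝ) 1,
      (f_pd < maxPrimaryRate f_pd f_ps f_sd p_q p_a ↔ f_pd < f_sd * (1 - p_q))) ∧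
    ∀ p_q ∈ Set.Ioo (0 : ℝ) 1, maxPrimaryRate f_pd f_ps f_sd p_q 0 = f_pd := by
  obtain ⟨hpd0, hpd1⟩ := hpd
  obtain ⟨hps0, _⟩ := hps
  obtain ⟨hsd0, _⟩ := hsd
  constructor
  · rintro p_q ⟨hq0, hq1⟩ p_a ⟨ha0, _⟩
    have hs : 0 < f_sd * (1 - p_q) := mul_pos hsd0 (by linarith)
    have ht : 0 < p_a * f_ps * (1 - f_pd) := mul_pos (mul_pos ha0 hps0) (by linarith)
    unfold maxPrimaryRate
    rw [lt_div_iff₀ (by linarith)]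
    constructor <;> intro h <;> nlinarith
  · rintro p_q ⟨hq0, hq1⟩
    have hs : 0 < f_sd * (1 - p_q) := mul_pos hsd0 (by linarith)
    unfold maxPrimaryRate
    rw [zero_mul, zero_mul, add_zero, add_zero]
    field_simp
end

section
/- (Lemma 3, primary delay part) Fix channel success probabilities f_pd, f_ps, f_sd ∈ (0,1) with f_pd < f_sd, an admission probability p_a ∈ (0,1], and arrival rates λ_p, λ_s ∈ (0,1). Suppose 0 < p_q1 < p_q2 < 1 and the stability conditions λ_p < f_sd·(1−p_q)·μ/(f_sd·(1−p_q)+δ) and λ_s < p_q·f_sd·(1−λ_p/μ) hold at p_q = p_q1 and at p_q = p_q2. Then the average primary delay is strictly increasing in the queue-selection probability: D_p(p_q1) < D_p(p_q2). -/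
/-- Average length of the primary queue N_p. -/
noncomputable def Np (f_pd f_ps p_a lp : ℝ) : ℝ :=
  (lp - lp ^ 2) / (f_pd + p_a * f_ps * (1 - f_pd) - lp)

/-- Average length of the relay queue N_sp. -/
noncomputable def Nsp (f_pd f_ps f_sd p_a p_q lp : ℝ) : ℝ :=
  let δ := p_a * f_ps * (1 - f_pd)
  let μ := f_pd + δ
  let m := δ * (((1 - p_q) * f_sd - f_pd) / μ - (1 - p_q) * f_sd - δ)
  let n := δ * μ
  let α := (1 - p_q) * f_sd + δ
  let β := μ * (-2 * (1 - p_q) * f_sd - δ)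
  let γ := (1 - p_q) * f_sd * μ ^ 2
  (m * lp ^ 2 + n * lp) / (α * lp ^ 2 + β * lp + γ)

/-- Average primary delay D_p. -/
noncomputable def Dp (f_pd f_ps f_sd p_a p_q lp : ℝ) : ℝ :=
  (Np f_pd f_ps p_a lp + Nsp f_pd f_ps f_sd p_a p_q lp) / lp

/-- Average length of the secondary queue N_s. -/
noncomputable def Ns (f_pd f_ps f_sd p_a p_q lp ls : ℝ) : ℝ :=
  let δ := p_a * f_ps * (1 - f_pd)
  let μ := f_pd + δ
  let A := p_q * f_sd * (μ - 1)
  let B := μ - lp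
  let C := (ls - p_q * f_sd) * μ + p_q * f_sd * lp
  (lp * ls * A + (ls ^ 2 - ls) * B * (B + lp)) / (B * C)

/-- Average secondary delay D_s. -/
noncomputable def Ds (f_pd f_ps f_sd p_a p_q lp ls : ℝ) : ℝ :=
  Ns f_pd f_ps f_sd p_a p_q lp ls / ls

/-- Stability conditions for the operating point (λ_p, λ_s). -/
def IsStable (f_pd f_ps f_sd p_a p_q lp ls : ℝ) : Prop :=
  let δ := p_a * f_ps * (1 - f_pd)
  let μ := f_pd + δ
  lp < f_sd * (1 - p_q) * μ / (f_sd * (1 - p_q) + δ) ∧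
    ls < p_q * f_sd * (1 - lp / μ)

set_option maxHeartbeats 2000000 in
lemma mobius_key (a b c d x1 x2 : ℝ) (h1 : 0 < c * x1 + d) (h2 : 0 < c * x2 + d)
    (hx : x2 < x1) (h : a * d - b * c < 0) :
    (a * x1 + b) / (c * x1 + d) < (a * x2 + b) / (c * x2 + d) := by
  rw [div_lt_div_iff₀ h1 h2]
  nlinarith [mul_neg_of_neg_of_pos h (sub_pos.2 hx)]

set_option maxHeartbeats 2000000 in
/-- Lemma 3, primary delay part: under stability at both points, D_p is
strictly increasing in the queue-selection probability p_q. -/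
theorem Dp_strictMono_in_pq (f_pd f_ps f_sd p_a lp ls : ℝ)
    (hpd : f_pd ∈ Set.Ioo (0 : ℝ) 1) (hps : f_ps ∈ Set.Ioo (0 : ℝ) 1)
    (hsd : f_sd ∈ Set.Ioo (0 : ℝ) 1) (hlt : f_pd < f_sd)
    (ha : p_a ∈ Set.Ioc (0 : ℝ) 1)
    (hlp : lp ∈ Set.Ioo (0 : ℝ) 1) (hls : ls ∈ Set.Ioo (0 : ℝ) 1)
    (p_q1 p_q2 : ℝ) (h1 : 0 < p_q1) (h12 : p_q1 < p_q2) (h2 : p_q2 < 1)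
    (hstab1 : IsStable f_pd f_ps f_sd p_a p_q1 lp ls)
    (hstab2 : IsStable f_pd f_ps f_sd p_a p_q2 lp ls) :
    Dp f_pd f_ps f_sd p_a p_q1 lp < Dp f_pd f_ps f_sd p_a p_q2 lp := by
  obtain ⟨hpd0, hpd1⟩ := hpd
  obtain ⟨hps0, hps1⟩ := hps
  obtain ⟨hsd0, hsd1⟩ := hsd
  obtain ⟨ha0, ha1⟩ := ha
  obtain ⟨hlp0, hlp1⟩ := hlp
  set δ : ℝ := p_a * f_ps * (1 - f_pd) with hδdef
  set μ : ℝ := f_pd + δ with hμdef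
  have hδ0 : 0 < δ := by
    have : 0 < 1 - f_pd := by linarith
    positivity
  have hμ0 : 0 < μ := by simp only [hμdef]; linarith
  have hμ1 : μ < 1 := by
    have h3 : p_a * f_ps < 1 := by nlinarith
    have h4 : 0 < 1 - f_pd := by linarith
    simp only [hμdef, hδdef]; nlinarith
  -- x values
  set x1 : ℝ := (1 - p_q1) * f_sd with hx1def
  set x2 : ℝ := (1 - p_q2) * f_sd with hx2def
  have hx1pos : 0 < x1 := by
    have : 0 < 1 - p_q1 := by linarith
    positivity
  have hx2pos : 0 < x2 := by
    have : 0 < 1 - p_q2 := by linarith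
    positivity
  have hx21 : x2 < x1 := by
    simp only [hx1def, hx2def]; nlinarith
  -- stability consequences
  have stab : ∀ x : ℝ, 0 < x → lp < f_sd * (1 - (1 - x / f_sd)) * μ / (f_sd * (1 - (1 - x / f_sd)) + δ) →
      δ * lp < x * (μ - lp) := by
    intro x hx hs
    have hfs : f_sd ≠ 0 := ne_of_gt hsd0
    have hxx : f_sd * (1 - (1 - x / f_sd)) = x := by field_simp; ring
    rw [hxx] at hs
    have hxd : 0 < x + δ := by linarith
    rw [lt_div_iff₀ hxd] at hs
    nlinarith
  have hs1 : δ * lp < x1 * (μ - lp) := by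
    have h := hstab1.1
    apply stab x1 hx1pos
    have : (1 - x1 / f_sd) = p_q1 := by
      simp only [hx1def]; field_simp; ring
    rw [this]
    convert h using 3 <;> ring
  have hs2 : δ * lp < x2 * (μ - lp) := by
    have h := hstab2.1
    apply stab x2 hx2pos
    have : (1 - x2 / f_sd) = p_q2 := by
      simp only [hx2def]; field_simp; ring
    rw [this]
    convert h using 3 <;> ring
  have hμlp : lp < μ := by nlinarith
  -- Möbius form of Nsp
  set A : ℝ := lp ^ 2 * δ * (1 - μ) / μ with hAdef
  set B : ℝ := lp * δ * (μ - lp * (f_pd + δ * μ) / μ) with hBdef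
  set C : ℝ := (μ - lp) ^ 2 with hCdef
  set D : ℝ := -(δ * lp * (μ - lp)) with hDdef
  have hform : ∀ p_q : ℝ, Nsp f_pd f_ps f_sd p_a p_q lp =
      (A * ((1 - p_q) * f_sd) + B) / (C * ((1 - p_q) * f_sd) + D) := by
    intro p_q
    have hμne : μ ≠ 0 := ne_of_gt hμ0
    simp only [Nsp, hAdef, hBdef, hCdef, hDdef, ← hδdef, ← hμdef]
    congr 1
    · field_simp; ring
    · ring
  have hden : ∀ x : ℝ, δ * lp < x * (μ - lp) → 0 < C * x + D := by
    intro x hx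
    simp only [hCdef, hDdef]
    nlinarith
  have hADBC : A * D - B * C < 0 := by
    have hμne : μ ≠ 0 := ne_of_gt hμ0
    have hkey : A * D - B * C =
        -(lp * δ * (μ - lp) * (lp ^ 2 * δ * (1 - μ) + (μ ^ 2 - lp * (f_pd + δ * μ)) * (μ - lp))) / μ := by
      simp only [hAdef, hBdef, hCdef, hDdef]
      field_simp
      ring
    rw [hkey]
    have hbr1 : 0 < lp ^ 2 * δ * (1 - μ) := by
      have : 0 < 1 - μ := by linarith
      positivity
    have hbr2 : 0 < μ ^ 2 - lp * (f_pd + δ * μ) := by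
      have e1 : lp * (f_pd + δ * μ) < μ * (f_pd + δ * μ) := by
        apply mul_lt_mul_of_pos_right hμlp
        have : 0 < δ * μ := by positivity
        linarith
      have e2 : μ * (f_pd + δ * μ) < μ ^ 2 := by
        have : δ * μ * (1 - μ) > 0 := by
          have : 0 < 1 - μ := by linarith
          positivity
        simp only [hμdef] at *
        nlinarith
      linarith
    have hmlp : 0 < μ - lp := by linarith
    have : 0 < lp * δ * (μ - lp) * (lp ^ 2 * δ * (1 - μ) + (μ ^ 2 - lp * (f_pd + δ * μ)) * (μ - lp)) := by
      apply mul_pos (by positivity)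
      nlinarith
    have := div_pos this hμ0
    rw [neg_div]
    linarith
  have hNsp : Nsp f_pd f_ps f_sd p_a p_q1 lp < Nsp f_pd f_ps f_sd p_a p_q2 lp := by
    rw [hform p_q1, hform p_q2]
    exact mobius_key A B C D _ _ (hden x1 hs1) (hden x2 hs2) hx21 hADBC
  simp only [Dp]
  rw [div_lt_div_iff₀ hlp0 hlp0]
  nlinarith [hNsp]
end

section
/- (Primary delay at the phase transition) Fix channel success probabilities f_pd, f_ps, f_sd ∈ (0,1) with f_pd < f_sd, set p_q = 1 − f_pd/f_sd, and fix a primary arrival rate λ_p with 0 < λ_p < f_pd. Then for every admission probability p_a ∈ (0,1], the average primary delay is independent of p_a and equals D_p = (1 − λ_p)/(f_pd − λ_p); equivalently, N_p + N_sp = λ_p·(1 − λ_p)/(f_pd − λ_p) for all p_a ∈ (0,1]. -/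
/-- Primary delay at the phase transition p_q = 1 − f_pd/f_sd: for every
p_a ∈ (0,1], the average primary delay is independent of p_a and equals
(1 − λ_p)/(f_pd − λ_p); equivalently N_p + N_sp = λ_p(1 − λ_p)/(f_pd − λ_p). -/
theorem Dp_phase_transition (f_pd f_ps f_sd lp : ℝ)
    (hpd : f_pd ∈ Set.Ioo (0 : ℝ) 1) (hps : f_ps ∈ Set.Ioo (0 : ℝ) 1)
    (hsd : f_sd ∈ Set.Ioo (0 : ℝ) 1) (hlt : f_pd < f_sd)
    (hlp0 : 0 < lp) (hlp : lp < f_pd) :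
    ∀ p_a ∈ Set.Ioc (0 : ℝ) 1,
      Dp f_pd f_ps f_sd p_a (1 - f_pd / f_sd) lp = (1 - lp) / (f_pd - lp) ∧
      Np f_pd f_ps p_a lp + Nsp f_pd f_ps f_sd p_a (1 - f_pd / f_sd) lp
        = lp * (1 - lp) / (f_pd - lp) := by
  intro p_a hpa
  obtain ⟨hpd0, hpd1⟩ := hpd
  obtain ⟨hps0, hps1⟩ := hps
  obtain ⟨hsd0, hsd1⟩ := hsd
  obtain ⟨hpa0, hpa1⟩ := hpa
  set δ := p_a * f_ps * (1 - f_pd) with hδdef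
  have hδ : 0 < δ := by
    apply mul_pos (mul_pos hpa0 hps0); linarith
  have hfsd : f_sd ≠ 0 := ne_of_gt hsd0
  have hq : (1 - (1 - f_pd / f_sd)) * f_sd = f_pd := by field_simp; ring
  have hfl : (0:ℝ) < f_pd - lp := by linarith
  have hμlp : (0:ℝ) < f_pd + δ - lp := by linarith
  have hμ : (0:ℝ) < f_pd + δ := by linarith
  have key : Np f_pd f_ps p_a lp + Nsp f_pd f_ps f_sd p_a (1 - f_pd / f_sd) lp
      = lp * (1 - lp) / (f_pd - lp) := by
    unfold Np Nsp
    simp only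
    rw [← hδdef, hq]
    rw [show (-2 : ℝ) * (1 - (1 - f_pd / f_sd)) * f_sd - δ
        = -2 * f_pd - δ by rw [mul_assoc, hq]]
    have hden : (f_pd + δ) * lp ^ 2 + (f_pd + δ) * (-2 * f_pd - δ) * lp
        + f_pd * (f_pd + δ) ^ 2 = (f_pd + δ) * ((f_pd - lp) * (f_pd + δ - lp)) := by ring
    rw [hden]
    have h1 : f_pd + δ - lp ≠ 0 := ne_of_gt hμlp
    have h2 : (f_pd + δ) * ((f_pd - lp) * (f_pd + δ - lp)) ≠ 0 := by positivity
    have h3 : f_pd - lp ≠ 0 := ne_of_gt hfl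
    have h4 : f_pd + δ ≠ 0 := ne_of_gt hμ
    field_simp
    ring
  refine ⟨?_, key⟩
  unfold Dp
  rw [key]
  rw [div_div, mul_comm (f_pd - lp) lp, ← div_div,
    mul_div_cancel_left₀ _ (ne_of_gt hlp0)]
end

section
/- (Lemma 4, secondary delay part) Fix channel success probabilities f_pd, f_ps, f_sd ∈ (0,1) with f_pd < f_sd, a queue-selection probability p_q ∈ (0,1), and arrival rates λ_p, λ_s ∈ (0,1). Suppose 0 < p_a1 < p_a2 ≤ 1 and the stability conditions λ_p < f_sd·(1−p_q)·μ/(f_sd·(1−p_q)+δ) and λ_s < p_q·f_sd·(1−λ_p/μ) hold at p_a = p_a1 and at p_a = p_a2. Then the average secondary delay is strictly decreasing in the admission probability, irrespective of the choice of p_q: D_s(p_a2) < D_s(p_a1). -/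
lemma Ds_key (a b p s k : ℝ) (hp : 0 < p) (hpa : p < a) (hab : a < b) (hb1 : b < 1)
    (hs : 0 < s) (hk : 0 < k) (hk1 : k < 1)
    (h1 : s * a < k * (a - p)) (h2 : s * b < k * (b - p)) :
    (p * s * (k * (b - 1)) + (s ^ 2 - s) * (b - p) * ((b - p) + p)) /
        ((b - p) * ((s - k) * b + k * p)) / s
      < (p * s * (k * (a - 1)) + (s ^ 2 - s) * (a - p) * ((a - p) + p)) /
        ((a - p) * ((s - k) * a + k * p)) / s := by
  have ha0 : 0 < a := hp.trans hpa
  have hQ1 : (a - p) * ((s - k) * a + k * p) < 0 := by nlinarith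
  have hQ2 : (b - p) * ((s - k) * b + k * p) < 0 := by nlinarith
  have hbr1 : (0:ℝ) < (b - p) * (a * (a - p) * (1 - k) + p * k * (1 - p)) :=
    mul_pos (by linarith) (by nlinarith [mul_pos (mul_pos ha0 (show (0:ℝ) < a - p by linarith)) (show (0:ℝ) < 1 - k by linarith), mul_pos (mul_pos hp hk) (show (0:ℝ) < 1 - p by linarith)])
  have hbr2 : (0:ℝ) < (1 - p) * (a + b - p) * (k * (a - p) - s * a) :=
    mul_pos (mul_pos (by linarith) (by linarith)) (by linarith)
  have hbr : (0:ℝ) < (b - p) * (a * (a - p) * (1 - k) + p * k * (1 - p))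
      - (1 - p) * (a + b - p) * (s * a - k * (a - p)) := by nlinarith
  have hfac : (0:ℝ) < s * (b - a) * p * k *
      ((b - p) * (a * (a - p) * (1 - k) + p * k * (1 - p))
        - (1 - p) * (a + b - p) * (s * a - k * (a - p))) :=
    mul_pos (mul_pos (mul_pos (mul_pos hs (by linarith)) hp) hk) hbr
  rw [div_lt_div_iff_of_pos_right hs]
  rw [← neg_div_neg_eq (p * s * (k * (b - 1)) + (s ^ 2 - s) * (b - p) * ((b - p) + p)),
      ← neg_div_neg_eq (p * s * (k * (a - 1)) + (s ^ 2 - s) * (a - p) * ((a - p) + p))]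
  rw [div_lt_div_iff₀ (by linarith) (by linarith)]
  nlinarith [hfac, ha0]

/-- Lemma 4, secondary delay part: under stability at both points, D_s is
strictly decreasing in the admission probability p_a, irrespective of p_q. -/
theorem Ds_strictAnti_in_pa (f_pd f_ps f_sd p_q lp ls : ℝ)
    (hpd : f_pd ∈ Set.Ioo (0 : ℝ) 1) (hps : f_ps ∈ Set.Ioo (0 : ℝ) 1)
    (hsd : f_sd ∈ Set.Ioo (0 : ℝ) 1) (hlt : f_pd < f_sd)
    (hq : p_q ∈ Set.Ioo (0 : ℝ) 1)
    (hlp : lp ∈ Set.Ioo (0 : ℝ) 1) (hls : ls ∈ Set.Ioo (0 : ℝ) 1)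
    (p_a1 p_a2 : ℝ) (h1 : 0 < p_a1) (h12 : p_a1 < p_a2) (h2 : p_a2 ≤ 1)
    (hstab1 : IsStable f_pd f_ps f_sd p_a1 p_q lp ls)
    (hstab2 : IsStable f_pd f_ps f_sd p_a2 p_q lp ls) :
    Ds f_pd f_ps f_sd p_a2 p_q lp ls < Ds f_pd f_ps f_sd p_a1 p_q lp ls := by
  obtain ⟨hpd0, hpd1⟩ := hpd
  obtain ⟨hps0, hps1⟩ := hps
  obtain ⟨hsd0, hsd1⟩ := hsd
  obtain ⟨hq0, hq1⟩ := hq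
  obtain ⟨hlp0, hlp1⟩ := hlp
  obtain ⟨hls0, hls1⟩ := hls
  obtain ⟨hs11, hs12⟩ := hstab1
  obtain ⟨hs21, hs22⟩ := hstab2
  have hδ1 : 0 < p_a1 * f_ps * (1 - f_pd) := mul_pos (mul_pos h1 hps0) (by linarith)
  have hδ2 : 0 < p_a2 * f_ps * (1 - f_pd) :=
    mul_pos (mul_pos (h1.trans h12) hps0) (by linarith)
  have hμ1pos : 0 < f_pd + p_a1 * f_ps * (1 - f_pd) := by linarith
  have hμ2pos : 0 < f_pd + p_a2 * f_ps * (1 - f_pd) := by linarith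
  have hc : 0 < f_sd * (1 - p_q) := mul_pos hsd0 (by linarith)
  have hpa : lp < f_pd + p_a1 * f_ps * (1 - f_pd) := by
    have hden : 0 < f_sd * (1 - p_q) + p_a1 * f_ps * (1 - f_pd) := by linarith
    have h : f_sd * (1 - p_q) * (f_pd + p_a1 * f_ps * (1 - f_pd)) /
        (f_sd * (1 - p_q) + p_a1 * f_ps * (1 - f_pd)) < f_pd + p_a1 * f_ps * (1 - f_pd) := by
      rw [div_lt_iff₀ hden]
      nlinarith [mul_pos hμ1pos hδ1]
    linarith [hs11]
  have hab : f_pd + p_a1 * f_ps * (1 - f_pd) < f_pd + p_a2 * f_ps * (1 - f_pd) := by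
    have := mul_lt_mul_of_pos_right (mul_lt_mul_of_pos_right h12 hps0) (show (0:ℝ) < 1 - f_pd by linarith)
    linarith
  have hb1 : f_pd + p_a2 * f_ps * (1 - f_pd) < 1 := by
    have h0 : p_a2 * f_ps < 1 := by nlinarith
    nlinarith [mul_pos (show (0:ℝ) < 1 - f_pd by linarith) (show (0:ℝ) < 1 - p_a2 * f_ps by linarith)]
  have hk : 0 < p_q * f_sd := mul_pos hq0 hsd0
  have hk1 : p_q * f_sd < 1 := by nlinarith
  have hkey1 : ls * (f_pd + p_a1 * f_ps * (1 - f_pd)) <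
      p_q * f_sd * ((f_pd + p_a1 * f_ps * (1 - f_pd)) - lp) := by
    have h := mul_lt_mul_of_pos_right hs12 hμ1pos
    have e : p_q * f_sd * (1 - lp / (f_pd + p_a1 * f_ps * (1 - f_pd))) *
        (f_pd + p_a1 * f_ps * (1 - f_pd)) =
        p_q * f_sd * ((f_pd + p_a1 * f_ps * (1 - f_pd)) - lp) := by
      field_simp
    linarith
  have hkey2 : ls * (f_pd + p_a2 * f_ps * (1 - f_pd)) <
      p_q * f_sd * ((f_pd + p_a2 * f_ps * (1 - f_pd)) - lp) := by
    have h := mul_lt_mul_of_pos_right hs22 hμ2pos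
    have e : p_q * f_sd * (1 - lp / (f_pd + p_a2 * f_ps * (1 - f_pd))) *
        (f_pd + p_a2 * f_ps * (1 - f_pd)) =
        p_q * f_sd * ((f_pd + p_a2 * f_ps * (1 - f_pd)) - lp) := by
      field_simp
    linarith
  exact Ds_key (f_pd + p_a1 * f_ps * (1 - f_pd)) (f_pd + p_a2 * f_ps * (1 - f_pd)) lp ls
    (p_q * f_sd) hlp0 hpa hab hb1 hls0 hk hk1 hkey1 hkey2
end
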